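/- Let X be a compact metric space equipped with its Borel σ-algebra and let s_1,…,s_m : X → ℂ be continuous functions. Define P : X → (m×m hermitian complex matrices) by P(x)_{ij} = s_i(x) · conj(s_j(x)). Then, inside the real vector space of m×m hermitian complex matrices, the closure of the set G = { Gram(μ) : μ a finite Borel measure on X } equals the closure of the set F₀ = { ∑_{i=1}^{t} a_i · P(x_i) : t ∈ ℕ, x_1,…,x_t ∈ X, a_1,…,a_t ≥ 0 } of finite nonnegative combinations of the matrices P(x). -/

import Mathlib

open MeasureTheory

attribute [local instance] Matrix.normedAddCommGroup Matrix.normedSpace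

noncomputable instance {m : ℕ} : ContinuousENorm (Matrix (Fin m) (Fin m) ℂ) :=
  (inferInstance : ContinuousENorm (Fin m → Fin m → ℂ))

noncomputable def evalCLM {m : ℕ} (i j : Fin m) : Matrix (Fin m) (Fin m) ℂ →L[ℝ] ℂ :=
  { toLinearMap :=
      { toFun := fun H => H i j
        map_add' := fun _ _ => rfl
        map_smul' := fun _ _ => rfl }
    cont := (continuous_apply j).comp (continuous_apply (A := fun _ : Fin m => Fin m → ℂ) i) }

section Aux

variable {X : Type*} {m : ℕ} (P : X → Matrix (Fin m) (Fin m) ℂ)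

/-- The cone of finite nonnegative combinations. -/
def coneSet : Set (Matrix (Fin m) (Fin m) ℂ) :=
  {H | ∃ (t : ℕ) (x : Fin t → X) (a : Fin t → ℝ), (∀ i, 0 ≤ a i) ∧
    H = ∑ i, a i • P (x i)}

lemma mem_coneSet_self (x : X) : P x ∈ coneSet P :=
  ⟨1, fun _ => x, fun _ => 1, fun _ => zero_le_one, by simp⟩

lemma zero_mem_coneSet : (0 : Matrix (Fin m) (Fin m) ℂ) ∈ coneSet P :=
  ⟨0, Fin.elim0, Fin.elim0, fun i => i.elim0, by simp⟩

lemma convex_coneSet : Convex ℝ (coneSet P) := by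
  rintro H1 ⟨t1, x1, a1, ha1, rfl⟩ H2 ⟨t2, x2, a2, ha2, rfl⟩ p q hp hq hpq
  refine ⟨t1 + t2, Fin.append x1 x2, Fin.append (p • a1) (q • a2), ?_, ?_⟩
  · intro i
    refine Fin.addCases (fun i => ?_) (fun i => ?_) i
    · simpa [Fin.append_left] using mul_nonneg hp (ha1 i)
    · simpa [Fin.append_right] using mul_nonneg hq (ha2 i)
  · rw [Fin.sum_univ_add]
    simp only [Fin.append_left, Fin.append_right, Pi.smul_apply, smul_eq_mul, mul_smul]
    rw [← Finset.smul_sum, ← Finset.smul_sum]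

lemma smul_mem_coneSet {c : ℝ} (hc : 0 ≤ c) {H : Matrix (Fin m) (Fin m) ℂ}
    (hH : H ∈ coneSet P) : c • H ∈ coneSet P := by
  obtain ⟨t, x, a, ha, rfl⟩ := hH
  refine ⟨t, x, c • a, fun i => mul_nonneg hc (ha i), ?_⟩
  rw [Finset.smul_sum]
  simp only [Pi.smul_apply, smul_eq_mul, mul_smul]

lemma smul_mem_closure_coneSet {c : ℝ} (hc : 0 ≤ c) {H : Matrix (Fin m) (Fin m) ℂ}
    (hH : H ∈ closure (coneSet P)) : c • H ∈ closure (coneSet P) := by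
  have h1 : c • H ∈ (c • ·) '' closure (coneSet P) := ⟨H, hH, rfl⟩
  have h2 : (c • ·) '' closure (coneSet P) ⊆ closure ((c • ·) '' coneSet P) :=
    image_closure_subset_closure_image (continuous_const_smul c)
  refine closure_mono ?_ (h2 h1)
  rintro _ ⟨K, hK, rfl⟩
  exact smul_mem_coneSet P hc hK

end Aux

theorem stmt_5 {X : Type*} [MetricSpace X] [CompactSpace X]
    [MeasurableSpace X] [BorelSpace X]
    {m : ℕ} (s : Fin m → X → ℂ) (hs : ∀ i, Continuous (s i))
    (P : X → Matrix (Fin m) (Fin m) ℂ)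
    (hP : ∀ x i j, P x i j = s i x * (starRingEnd ℂ) (s j x)) :
    closure {H : Matrix (Fin m) (Fin m) ℂ |
        ∃ μ : Measure X, IsFiniteMeasure μ ∧
          ∀ i j, H i j = ∫ x, s i x * (starRingEnd ℂ) (s j x) ∂μ}
      = closure {H : Matrix (Fin m) (Fin m) ℂ |
        ∃ (t : ℕ) (x : Fin t → X) (a : Fin t → ℝ), (∀ i, 0 ≤ a i) ∧
          H = ∑ i, a i • P (x i)} := by
  have hPc : Continuous P := by
    refine continuous_matrix fun i j => ?_
    have : (fun a => P a i j) = fun a => s i a * (starRingEnd ℂ) (s j a) := by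
      funext a; exact hP a i j
    rw [this]
    exact (hs i).mul (continuous_star.comp (hs j))
  apply le_antisymm
  · -- Gram matrices lie in the closure of the cone
    refine closure_minimal ?_ isClosed_closure
    rintro H ⟨μ, hμ, hH⟩
    haveI := hμ
    have hPint : Integrable P μ :=
      hPc.integrable_of_hasCompactSupport (HasCompactSupport.of_compactSpace P)
    have hHint : H = ∫ x, P x ∂μ := by
      funext i j
      rw [hH i j]
      have := ((evalCLM i j).integral_comp_comm hPint).symm
      simp only [evalCLM, ContinuousLinearMap.coe_mk', LinearMap.coe_mk, AddHom.coe_mk] at this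
      refine Eq.trans ?_ this.symm
      congr 1
      funext x
      exact (hP x i j).symm
    rw [hHint]
    rcases eq_or_ne (μ Set.univ) 0 with h0 | h0
    · rw [Measure.measure_univ_eq_zero.mp h0]
      simpa [coneSet] using subset_closure (zero_mem_coneSet P)
    · haveI : NeZero μ := ⟨fun h => h0 (by simp [h])⟩
      set ν : Measure X := (μ Set.univ)⁻¹ • μ with hν
      haveI : IsProbabilityMeasure ν := MeasureTheory.isProbabilityMeasureSMul
      have hμν : μ = (μ Set.univ) • ν := by
        rw [hν, smul_smul, ENNReal.mul_inv_cancel h0 (measure_ne_top μ _), one_smul]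
      have hPintν : Integrable P ν :=
        hPc.integrable_of_hasCompactSupport (HasCompactSupport.of_compactSpace P)
      have hmem : (∫ x, P x ∂ν) ∈ closure (coneSet P) := by
        refine (convex_coneSet P).closure.integral_mem isClosed_closure ?_ hPintν
        exact Filter.Eventually.of_forall fun x => subset_closure (mem_coneSet_self P x)
      have : ∫ x, P x ∂μ = (μ Set.univ).toReal • ∫ x, P x ∂ν := by
        conv_lhs => rw [hμν]
        rw [integral_smul_measure]
      rw [this]
      exact smul_mem_closure_coneSet P ENNReal.toReal_nonneg hmem
  · -- the cone consists of Gram matrices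
    refine closure_mono ?_
    rintro H ⟨t, x, a, ha, rfl⟩
    set μ : Measure X := ∑ k : Fin t, ENNReal.ofReal (a k) • Measure.dirac (x k) with hμ
    haveI hfin : ∀ k : Fin t, IsFiniteMeasure (ENNReal.ofReal (a k) • Measure.dirac (x k)) := by
      intro k
      constructor
      simp [Measure.smul_apply, ENNReal.ofReal_lt_top, lt_top_iff_ne_top,
        ENNReal.mul_eq_top]
    refine ⟨μ, ?_, ?_⟩
    · constructor
      rw [hμ]
      simp only [Measure.coe_finset_sum, Finset.sum_apply]
      exact ENNReal.sum_lt_top.mpr fun k _ =>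
        (measure_lt_top (ENNReal.ofReal (a k) • Measure.dirac (x k)) _)
    · intro i j
      have hfcont : Continuous fun y => s i y * (starRingEnd ℂ) (s j y) :=
        (hs i).mul (continuous_star.comp (hs j))
      have hint : ∀ k : Fin t,
          Integrable (fun y => s i y * (starRingEnd ℂ) (s j y))
            (ENNReal.ofReal (a k) • Measure.dirac (x k)) := fun k =>
        hfcont.integrable_of_hasCompactSupport (HasCompactSupport.of_compactSpace _)
      rw [hμ, integral_finset_sum_measure fun k _ => hint k]
      have : ∀ k : Fin t,
          ∫ y, s i y * (starRingEnd ℂ) (s j y) ∂(ENNReal.ofReal (a k) • Measure.dirac (x k))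
            = a k • (s i (x k) * (starRingEnd ℂ) (s j (x k))) := by
        intro k
        rw [integral_smul_measure, integral_dirac, ENNReal.toReal_ofReal (ha k)]
      simp only [this]
      rw [Matrix.sum_apply]
      refine Finset.sum_congr rfl fun k _ => ?_
      simp [Matrix.smul_apply, hP]
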